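/- Let V be a flat C[[t]]-family of vertex O_X-algebroids such that V₀ = V/tV is commutative. Then V₀, with the O_X-module structure f·v̄ = (f*v)‾, the derivation ∂₀(f) = ∂(f)‾, the anchor π₀(v̄) = ((1/t)π(v))‾, the bracket [v̄₁,v̄₂]₀ = ((1/t)[v₁,v₂])‾, and the pairing ⟨v̄₁,v̄₂⟩₀ = ((1/t)⟨v₁,v₂⟩)‾, is a Courant O_X-algebroid. -/
import Mathlib


noncomputable section

/-- The formal parameter `t` of the `ℂ[[t]]`-family. -/
def tpar : PowerSeries ℂ := PowerSeries.X

/-- The image of `t` in a `ℂ[[t]]`-algebra of functions `O`. -/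
def tO (O : Type*) [CommRing O] [Algebra (PowerSeries ℂ) O] : O :=
  algebraMap (PowerSeries ℂ) O tpar

/-- let `V` be a flat `ℂ[[t]]`-family of vertex `O`-algebroids
(the nine vertex algebroid axioms hold, all operations are `ℂ[[t]]`-bilinear,
and flatness is encoded by `t`-torsion-freeness) such that `V₀ = V/tV` is
commutative, i.e. the bracket, the pairing and the anchor take values in the
`t`-divisible part.  Then `V₀`, with the `O`-module structure `f·v̄ = (f*v)‾`,
derivation `∂₀f = (∂f)‾`, anchor `π₀(v̄) = ((1/t)π v)‾`, bracket
`[v̄₁,v̄₂]₀ = ((1/t)[v₁,v₂])‾` and pairing `⟨v̄₁,v̄₂⟩₀ = ((1/t)⟨v₁,v₂⟩)‾`, is a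
Courant `O`-algebroid.  Each Courant axiom for the divided operations is
expressed below through arbitrary choices of `t`-divided witnesses (which are
unique by torsion-freeness). -/
theorem quasiclassical_limit_is_courant
    (O : Type*) [CommRing O] [Algebra (PowerSeries ℂ) O]
    (V : Type*) [AddCommGroup V] [Module (PowerSeries ℂ) V]
    (st : O → V → V)
    (br : V → V → V)
    (anchor : V → Derivation (PowerSeries ℂ) O O)
    (pr : V → V → O)
    (par : O → V)
    -- bilinearity of the operations over `ℂ[[t]]`
    (st_add₁ : ∀ f g v, st (f + g) v = st f v + st g v)
    (st_add₂ : ∀ f v w, st f (v + w) = st f v + st f w)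
    (st_Rsmul₁ : ∀ (r : PowerSeries ℂ) f v, st (r • f) v = r • st f v)
    (st_Rsmul₂ : ∀ (r : PowerSeries ℂ) f v, st f (r • v) = r • st f v)
    (st_one : ∀ v, st 1 v = v)
    (br_add₁ : ∀ u v w, br (u + v) w = br u w + br v w)
    (br_add₂ : ∀ u v w, br u (v + w) = br u v + br u w)
    (br_Rsmul₁ : ∀ (r : PowerSeries ℂ) v w, br (r • v) w = r • br v w)
    (br_Rsmul₂ : ∀ (r : PowerSeries ℂ) v w, br v (r • w) = r • br v w)
    (pr_add₁ : ∀ u v w, pr (u + v) w = pr u w + pr v w)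
    (pr_Rsmul₁ : ∀ (r : PowerSeries ℂ) v w, pr (r • v) w = algebraMap (PowerSeries ℂ) O r * pr v w)
    (pr_symm : ∀ v w, pr v w = pr w v)
    (anchor_add : ∀ v w, anchor (v + w) = anchor v + anchor w)
    (anchor_Rsmul : ∀ (r : PowerSeries ℂ) v,
      anchor (r • v) = algebraMap (PowerSeries ℂ) O r • anchor v)
    (par_add : ∀ f g, par (f + g) = par f + par g)
    (par_Rsmul : ∀ (r : PowerSeries ℂ) f, par (r • f) = r • par f)
    -- the vertex algebroid axioms
    (anchor_par : ∀ f, anchor (par f) = 0)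
    (anchor_br : ∀ v w, anchor (br v w) = ⁅anchor v, anchor w⁆)
    (jacobi : ∀ u v w, br u (br v w) = br (br u v) w + br v (br u w))
    (va_assoc : ∀ f g v,
      st f (st g v) - st (f * g) v = st (anchor v f) (par g) + st (anchor v g) (par f))
    (va_leib : ∀ f v₁ v₂, br v₁ (st f v₂) = st (anchor v₁ f) v₂ + st f (br v₁ v₂))
    (va_symm : ∀ v₁ v₂, br v₁ v₂ + br v₂ v₁ = par (pr v₁ v₂))
    (va_anchor : ∀ f v, anchor (st f v) = f • anchor v)
    (va_pair : ∀ f v₁ v₂, pr (st f v₁) v₂ = f * pr v₁ v₂ - anchor v₁ (anchor v₂ f))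
    (va_invar : ∀ v v₁ v₂, anchor v (pr v₁ v₂) = pr (br v v₁) v₂ + pr v₁ (br v v₂))
    (va_der : ∀ f g, par (f * g) = st f (par g) + st g (par f))
    (va_brpar : ∀ v f, br v (par f) = par (anchor v f))
    (va_prpar : ∀ v f, pr v (par f) = anchor v f)
    -- commutativity of `V₀`: bracket, pairing and anchor take values in `t·(-)`
    (hbr_div : ∀ v w, ∃ u, br v w = tpar • u)
    (hpr_div : ∀ v w, ∃ g : O, pr v w = tO O * g)
    (han_div : ∀ v, ∃ ξ, anchor v = tO O • ξ)
    -- flatness of the family: `t`-torsion-freeness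
    (htV : ∀ v : V, tpar • v = 0 → v = 0)
    (htO : ∀ g : O, tO O * g = 0 → g = 0)
    (htT : ∀ ξ : Derivation (PowerSeries ℂ) O O, tO O • ξ = 0 → ξ = 0) :
    -- `V₀` is an `O`-module: `*` is associative mod `t`
    (∀ f g v, ∃ w, st f (st g v) - st (f * g) v = tpar • w)
    -- the divided pairing is `O`-bilinear
    ∧ (∀ f v₁ v₂, ∃ g : O, pr (st f v₁) v₂ - f * pr v₁ v₂ = tO O * (tO O * g))
    -- Courant-Leibniz rule for the divided bracket
    ∧ (∀ f v₁ v₂ B ξ₁, br v₁ v₂ = tpar • B → anchor v₁ = tO O • ξ₁ →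
        br v₁ (st f v₂) = tpar • (st (ξ₁ f) v₂ + st f B))
    -- symmetrization of the divided bracket is `∂₀` of the divided pairing
    ∧ (∀ v₁ v₂ B₁₂ B₂₁ g, br v₁ v₂ = tpar • B₁₂ → br v₂ v₁ = tpar • B₂₁ →
        pr v₁ v₂ = tO O * g → B₁₂ + B₂₁ = par g)
    -- Jacobi identity for the divided bracket
    ∧ (∀ v₁ v₂ v₃ B₂₃ B₁₂ B₁₃ J₁ J₂ J₃,
        br v₂ v₃ = tpar • B₂₃ → br v₁ v₂ = tpar • B₁₂ → br v₁ v₃ = tpar • B₁₃ →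
        br v₁ B₂₃ = tpar • J₁ → br B₁₂ v₃ = tpar • J₂ → br v₂ B₁₃ = tpar • J₃ →
        J₁ = J₂ + J₃)
    -- the divided anchor is a morphism of Leibniz algebras
    ∧ (∀ v₁ v₂ B ξ₁ ξ₂ ξB, br v₁ v₂ = tpar • B →
        anchor v₁ = tO O • ξ₁ → anchor v₂ = tO O • ξ₂ → anchor B = tO O • ξB →
        ξB = ⁅ξ₁, ξ₂⁆)
    -- the divided anchor is `O`-linear
    ∧ (∀ f v ξ, anchor v = tO O • ξ → anchor (st f v) = tO O • (f • ξ))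
    -- invariance of the divided pairing
    ∧ (∀ v v₁ v₂ B₁ B₂ c₁ c₂ g ξ,
        br v v₁ = tpar • B₁ → br v v₂ = tpar • B₂ →
        pr B₁ v₂ = tO O * c₁ → pr v₁ B₂ = tO O * c₂ →
        pr v₁ v₂ = tO O * g → anchor v = tO O • ξ →
        c₁ + c₂ = ξ g)
    -- `[v, ∂₀ f] = ∂₀ (π₀(v) f)`
    ∧ (∀ v f ξ, anchor v = tO O • ξ → br v (par f) = tpar • par (ξ f))
    -- `⟨v, ∂₀ f⟩₀ = π₀(v) f`
    ∧ (∀ v f ξ, anchor v = tO O • ξ → pr v (par f) = tO O * (ξ f)) := by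

  have ht : ∀ x : O, tpar • x = tO O * x := fun x => Algebra.smul_def tpar x
  have halg : algebraMap (PowerSeries ℂ) O tpar = tO O := rfl
  refine ⟨?_, ?_, ?_, ?_, ?_, ?_, ?_, ?_, ?_, ?_⟩
  · intro f g v
    obtain ⟨ξ, hξ⟩ := han_div v
    refine ⟨st (ξ f) (par g) + st (ξ g) (par f), ?_⟩
    rw [va_assoc, hξ]
    simp only [Derivation.smul_apply, smul_eq_mul]
    rw [← ht, ← ht, st_Rsmul₁, st_Rsmul₁, smul_add]
  · intro f v₁ v₂
    obtain ⟨ξ₁, h₁⟩ := han_div v₁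
    obtain ⟨ξ₂, h₂⟩ := han_div v₂
    refine ⟨-(ξ₁ (ξ₂ f)), ?_⟩
    have hz : ξ₁ (tO O) = 0 := by
      simpa [tO] using ξ₁.map_algebraMap (R := PowerSeries ℂ) tpar
    rw [va_pair, h₁, h₂]
    simp only [Derivation.smul_apply, smul_eq_mul]
    rw [Derivation.leibniz, hz]
    simp only [smul_eq_mul]
    ring
  · intro f v₁ v₂ B ξ₁ hB hξ
    rw [va_leib, hB, hξ, Derivation.smul_apply, smul_eq_mul, ← ht, st_Rsmul₁,
      st_Rsmul₂, smul_add]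
  · intro v₁ v₂ B₁₂ B₂₁ g h12 h21 hg
    have hs := va_symm v₁ v₂
    rw [h12, h21, hg, ← ht, par_Rsmul] at hs
    have h0 : tpar • (B₁₂ + B₂₁ - par g) = 0 := by
      rw [smul_sub, smul_add, hs, sub_self]
    exact eq_of_sub_eq_zero (htV _ h0)
  · intro v₁ v₂ v₃ B₂₃ B₁₂ B₁₃ J₁ J₂ J₃ h23 h12 h13 hJ1 hJ2 hJ3
    have hJ := jacobi v₁ v₂ v₃
    rw [h23, h12, h13, br_Rsmul₂, br_Rsmul₁, br_Rsmul₂, hJ1, hJ2, hJ3] at hJ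
    have h0 : tpar • (tpar • (J₁ - (J₂ + J₃))) = 0 := by
      rw [smul_sub, smul_sub, smul_add, smul_add, hJ, sub_self]
    exact eq_of_sub_eq_zero (htV _ (htV _ h0))
  · intro v₁ v₂ B ξ₁ ξ₂ ξB hB h₁ h₂ hξB
    have h := anchor_br v₁ v₂
    rw [hB, anchor_Rsmul, h₁, h₂, hξB, halg] at h
    have hz1 : ξ₁ (tO O) = 0 := by
      simpa [tO] using ξ₁.map_algebraMap (R := PowerSeries ℂ) tpar
    have hz2 : ξ₂ (tO O) = 0 := by
      simpa [tO] using ξ₂.map_algebraMap (R := PowerSeries ℂ) tpar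
    have key : tO O • (tO O • (ξB - ⁅ξ₁, ξ₂⁆)) = 0 := by
      ext x
      have hx := DFunLike.congr_fun h x
      simp only [Derivation.smul_apply, Derivation.commutator_apply, smul_eq_mul,
        Derivation.sub_apply, Derivation.zero_apply, Derivation.leibniz, hz1, hz2,
        mul_zero, add_zero] at hx ⊢
      linear_combination hx
    exact eq_of_sub_eq_zero (htT _ (htT _ key))
  · intro f v ξ hξ
    rw [va_anchor, hξ, smul_smul, smul_smul, mul_comm]
  · intro v v₁ v₂ B₁ B₂ c₁ c₂ g ξ hB₁ hB₂ hc₁ hc₂ hg hξ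
    have hz : ξ (tO O) = 0 := by
      simpa [tO] using ξ.map_algebraMap (R := PowerSeries ℂ) tpar
    have h := va_invar v v₁ v₂
    rw [hB₁, hB₂, hg, hξ, pr_Rsmul₁, pr_symm v₁ (tpar • B₂), pr_Rsmul₁,
      pr_symm B₂ v₁, hc₁, hc₂, halg] at h
    simp only [Derivation.smul_apply, smul_eq_mul, Derivation.leibniz, hz,
      mul_zero, add_zero] at h
    have h0 : tO O * (tO O * (c₁ + c₂ - ξ g)) = 0 := by linear_combination -h
    exact eq_of_sub_eq_zero (htO _ (htO _ h0))
  · intro v f ξ hξ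
    rw [va_brpar, hξ, Derivation.smul_apply, smul_eq_mul, ← ht, par_Rsmul]
  · intro v f ξ hξ
    rw [va_prpar, hξ, Derivation.smul_apply, smul_eq_mul]


end
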